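/- The Robinson polynomial is nonnegative on ℝ²: for all x, y ∈ ℝ, x⁶ + y⁶ + 1 − (x⁴y² + x²y⁴ + x⁴ + y⁴ + x² + y²) + 3x²y² ≥ 0. Moreover it vanishes at the eight points (±1, ±1), (±1, 0), (0, ±1), so its global infimum over ℝ² equals 0 and these points are global minimizers. -/
import Mathlib


/-- the Robinson polynomial
`x⁶ + y⁶ + 1 − (x⁴y² + x²y⁴ + x⁴ + y⁴ + x² + y²) + 3x²y²` is nonnegative on `ℝ²`, vanishes
at the eight points `(±1, ±1), (±1, 0), (0, ±1)`, and its global infimum over `ℝ²` equals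
`0`, attained at these points. -/
theorem robinson_nonneg_and_inf_zero :
    (∀ x y : ℝ, 0 ≤ x ^ 6 + y ^ 6 + 1
        - (x ^ 4 * y ^ 2 + x ^ 2 * y ^ 4 + x ^ 4 + y ^ 4 + x ^ 2 + y ^ 2)
        + 3 * x ^ 2 * y ^ 2) ∧
    (∀ x y : ℝ,
      (((x = 1 ∨ x = -1) ∧ (y = 1 ∨ y = -1)) ∨ ((x = 1 ∨ x = -1) ∧ y = 0) ∨
        (x = 0 ∧ (y = 1 ∨ y = -1))) →
      x ^ 6 + y ^ 6 + 1
        - (x ^ 4 * y ^ 2 + x ^ 2 * y ^ 4 + x ^ 4 + y ^ 4 + x ^ 2 + y ^ 2)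
        + 3 * x ^ 2 * y ^ 2 = 0) ∧
    IsGLB {v : ℝ | ∃ x y : ℝ, v = x ^ 6 + y ^ 6 + 1
        - (x ^ 4 * y ^ 2 + x ^ 2 * y ^ 4 + x ^ 4 + y ^ 4 + x ^ 2 + y ^ 2)
        + 3 * x ^ 2 * y ^ 2} 0 := by
  have hnn : ∀ x y : ℝ, 0 ≤ x ^ 6 + y ^ 6 + 1
        - (x ^ 4 * y ^ 2 + x ^ 2 * y ^ 4 + x ^ 4 + y ^ 4 + x ^ 2 + y ^ 2)
        + 3 * x ^ 2 * y ^ 2 := by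
    intro x y
    nlinarith [sq_nonneg (x^2-1), sq_nonneg (y^2-1), sq_nonneg (x^2-y^2), sq_nonneg (x*y),
      sq_nonneg (x^2+y^2-2), sq_nonneg (x*(x^2-1)), sq_nonneg (y*(y^2-1)),
      sq_nonneg (x*y*(x^2+y^2-2)), sq_nonneg x, sq_nonneg y]
  refine ⟨hnn, ?_, ?_⟩
  · rintro x y (⟨(rfl|rfl), (rfl|rfl)⟩ | ⟨(rfl|rfl), rfl⟩ | ⟨rfl, (rfl|rfl)⟩) <;> norm_num
  · constructor
    · rintro v ⟨x, y, rfl⟩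
      exact hnn x y
    · intro b hb
      exact hb ⟨1, 0, by norm_num⟩
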